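/- arXiv:2309.10364 — 2 statements merged into one kernel-verified Lean document; each statement's English description precedes it below -/
import Mathlib

section
/- Suppose ρ, p : (0,∞) → ℝ satisfy, for every positive differentiable a(t), the equation d/dt[ρ(a(t))] + 3(a'/a)(p(a(t)) + ρ(a(t))) = 0 (equivalently, ρ'(a)·a = −3(ρ(a)+p(a))). Let α : ℝ → ℝ be differentiable and Φ(t) differentiable. Then ρ̃(a,Φ) = e^{4α(Φ)}·ρ(a·e^{α(Φ)}) and p̃(a,Φ) = e^{4α(Φ)}·p(a·e^{α(Φ)}) satisfy the non-conservation equation d/dt[ρ̃(a(t),Φ(t))] + 3(a'/a)(p̃ + ρ̃) = −α'(Φ)·Φ'(t)·(3p̃ − ρ̃) along any differentiable trajectories a(t) > 0, Φ(t). -/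
/-- conformally rescaled densities of a conserved fluid solve the
    chameleon non-conservation equation ρ̇ + 3H(p+ρ) = -α̇(3p-ρ). -/
theorem stmt_2 (ρ p α : ℝ → ℝ)
    (hρdiff : ∀ x > (0:ℝ), DifferentiableAt ℝ ρ x)
    (hcons : ∀ x > (0:ℝ), x * deriv ρ x = -3 * (ρ x + p x))
    (hα : Differentiable ℝ α)
    (a Φ : ℝ → ℝ)
    (ha : Differentiable ℝ a) (hΦ : Differentiable ℝ Φ)
    (hapos : ∀ t, 0 < a t)
    (R P : ℝ → ℝ)
    (hR : ∀ t, R t = Real.exp (4 * α (Φ t)) * ρ (a t * Real.exp (α (Φ t))))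
    (hP : ∀ t, P t = Real.exp (4 * α (Φ t)) * p (a t * Real.exp (α (Φ t)))) :
    ∀ t, deriv R t + 3 * (deriv a t / a t) * (P t + R t)
      = -(deriv α (Φ t) * deriv Φ t) * (3 * P t - R t) := by
  intro t
  have hfun : R = fun s => Real.exp (4 * α (Φ s)) * ρ (a s * Real.exp (α (Φ s))) :=
    funext hR
  have hbpos : 0 < a t * Real.exp (α (Φ t)) := mul_pos (hapos t) (Real.exp_pos _)
  have hc : HasDerivAt (fun s => α (Φ s)) (deriv α (Φ t) * deriv Φ t) t :=
    ((hα (Φ t)).hasDerivAt).comp t (hΦ t).hasDerivAt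
  have he : HasDerivAt (fun s => Real.exp (α (Φ s)))
      (Real.exp (α (Φ t)) * (deriv α (Φ t) * deriv Φ t)) t := hc.exp
  have he4 : HasDerivAt (fun s => Real.exp (4 * α (Φ s)))
      (Real.exp (4 * α (Φ t)) * (4 * (deriv α (Φ t) * deriv Φ t))) t :=
    (hc.const_mul 4).exp
  have hb : HasDerivAt (fun s => a s * Real.exp (α (Φ s)))
      (deriv a t * Real.exp (α (Φ t)) +
        a t * (Real.exp (α (Φ t)) * (deriv α (Φ t) * deriv Φ t))) t :=
    ((ha t).hasDerivAt).mul he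
  have hρb : HasDerivAt (fun s => ρ (a s * Real.exp (α (Φ s))))
      (deriv ρ (a t * Real.exp (α (Φ t))) *
        (deriv a t * Real.exp (α (Φ t)) +
          a t * (Real.exp (α (Φ t)) * (deriv α (Φ t) * deriv Φ t)))) t :=
    ((hρdiff _ hbpos).hasDerivAt).comp t hb
  have hR' : HasDerivAt R
      (Real.exp (4 * α (Φ t)) * (4 * (deriv α (Φ t) * deriv Φ t)) *
          ρ (a t * Real.exp (α (Φ t))) +
        Real.exp (4 * α (Φ t)) *
          (deriv ρ (a t * Real.exp (α (Φ t))) *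
            (deriv a t * Real.exp (α (Φ t)) +
              a t * (Real.exp (α (Φ t)) * (deriv α (Φ t) * deriv Φ t))))) t := by
    rw [hfun]; exact he4.mul hρb
  rw [hR'.deriv, hR t, hP t]
  have key := hcons _ hbpos
  have hane : a t ≠ 0 := (hapos t).ne'
  have hene : Real.exp (α (Φ t)) ≠ 0 := Real.exp_ne_zero _
  have hD : deriv ρ (a t * Real.exp (α (Φ t))) =
      -3 * (ρ (a t * Real.exp (α (Φ t))) + p (a t * Real.exp (α (Φ t)))) /
        (a t * Real.exp (α (Φ t))) := by
    field_simp
    linarith [key]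
  rw [hD]
  field_simp
  ring
end

section
/- Fix n ≥ 1. Suppose ρ(a) = f(a^{-n}) and p(a) = g(a^{-n}) with g(x) = x f'(x) − f(x), so that ρ̇ + nH(p+ρ) = 0 along any trajectory a(t). Then ρ̃(a,Φ) = e^{(n+1)α(Φ)}ρ(a e^{α(Φ)}) and p̃(a,Φ) = e^{(n+1)α(Φ)}p(a e^{α(Φ)}) satisfy ρ̃̇ + nH(p̃+ρ̃) = −α̇(n·p̃ − ρ̃) along any differentiable a(t) > 0, Φ(t), where H = a'/a and α̇ = α'(Φ)Φ'. -/
/-- chameleon solution in (n+1)-dimensional FLRW: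
    ρ̃̇ + nH(p̃+ρ̃) = -α̇(n p̃ - ρ̃). -/
theorem stmt_3 (n : ℕ) (hn : 1 ≤ n)
    (f g α : ℝ → ℝ)
    (hf : Differentiable ℝ f) (hα : Differentiable ℝ α)
    (hg : ∀ x, g x = x * deriv f x - f x)
    (a Φ : ℝ → ℝ)
    (ha : Differentiable ℝ a) (hΦ : Differentiable ℝ Φ)
    (hapos : ∀ t, 0 < a t)
    (R P : ℝ → ℝ)
    (hR : ∀ t, R t = Real.exp (((n : ℝ) + 1) * α (Φ t))
      * f (((a t * Real.exp (α (Φ t))) ^ n)⁻¹))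
    (hP : ∀ t, P t = Real.exp (((n : ℝ) + 1) * α (Φ t))
      * g (((a t * Real.exp (α (Φ t))) ^ n)⁻¹)) :
    ∀ t, deriv R t + (n : ℝ) * (deriv a t / a t) * (P t + R t)
      = -(deriv α (Φ t) * deriv Φ t) * ((n : ℝ) * P t - R t) := by
  intro t
  have hat : a t ≠ 0 := (hapos t).ne'
  have hbt : a t * Real.exp (α (Φ t)) ≠ 0 := by positivity
  have hbnt : (a t * Real.exp (α (Φ t))) ^ n ≠ 0 := pow_ne_zero n hbt
  -- derivative of α ∘ Φ
  have hAd : HasDerivAt (fun s => α (Φ s)) (deriv α (Φ t) * deriv Φ t) t :=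
    (hα (Φ t)).hasDerivAt.comp t (hΦ t).hasDerivAt
  set A' := deriv α (Φ t) * deriv Φ t with hA'
  -- derivative of b = a * exp(α∘Φ)
  have hbd : HasDerivAt (fun s => a s * Real.exp (α (Φ s)))
      (deriv a t * Real.exp (α (Φ t)) + a t * (Real.exp (α (Φ t)) * A')) t :=
    (ha t).hasDerivAt.mul hAd.exp
  -- derivative of x = (b^n)⁻¹
  have hxd : HasDerivAt (fun s => ((a s * Real.exp (α (Φ s))) ^ n)⁻¹)
      (-((n : ℝ) * (a t * Real.exp (α (Φ t))) ^ (n - 1) *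
        (deriv a t * Real.exp (α (Φ t)) + a t * (Real.exp (α (Φ t)) * A')))
        / ((a t * Real.exp (α (Φ t))) ^ n) ^ 2) t :=
    (hbd.pow n).inv hbnt
  -- derivative of R
  have hRd : HasDerivAt R
      (Real.exp (((n : ℝ) + 1) * α (Φ t)) * (((n : ℝ) + 1) * A') *
        f (((a t * Real.exp (α (Φ t))) ^ n)⁻¹)
      + Real.exp (((n : ℝ) + 1) * α (Φ t)) *
        (deriv f (((a t * Real.exp (α (Φ t))) ^ n)⁻¹) *
          (-((n : ℝ) * (a t * Real.exp (α (Φ t))) ^ (n - 1) *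
            (deriv a t * Real.exp (α (Φ t)) + a t * (Real.exp (α (Φ t)) * A')))
            / ((a t * Real.exp (α (Φ t))) ^ n) ^ 2))) t := by
    have h1 : HasDerivAt (fun s => Real.exp (((n : ℝ) + 1) * α (Φ s)))
        (Real.exp (((n : ℝ) + 1) * α (Φ t)) * (((n : ℝ) + 1) * A')) t :=
      (hAd.const_mul (((n : ℝ) + 1))).exp
    have h2 : HasDerivAt (fun s => f (((a s * Real.exp (α (Φ s))) ^ n)⁻¹))
        (deriv f (((a t * Real.exp (α (Φ t))) ^ n)⁻¹) *
          (-((n : ℝ) * (a t * Real.exp (α (Φ t))) ^ (n - 1) *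
            (deriv a t * Real.exp (α (Φ t)) + a t * (Real.exp (α (Φ t)) * A')))
            / ((a t * Real.exp (α (Φ t))) ^ n) ^ 2)) t :=
      (hf _).hasDerivAt.comp t hxd
    have := h1.mul h2
    have hRfun : R = fun s => Real.exp (((n : ℝ) + 1) * α (Φ s))
        * f (((a s * Real.exp (α (Φ s))) ^ n)⁻¹) := funext hR
    rw [hRfun]
    exact this
  have hexp : Real.exp (α (Φ t)) ≠ 0 := Real.exp_ne_zero _
  have hpm : (a t * Real.exp (α (Φ t))) ^ (n - 1)
      = (a t * Real.exp (α (Φ t))) ^ n / (a t * Real.exp (α (Φ t))) := by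
    rw [eq_div_iff hbt, ← pow_succ]
    congr 1
    omega
  rw [hRd.deriv, hR t, hP t, hg, hpm]
  field_simp
  ring
end
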